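/- Let n ≥ 1 and λ = 16·log(40n). Let r, r̄, η ∈ ℝ^n satisfy Φ(r) ≥ 8n, ‖r̄ − r‖_∞ ≤ 1/(48λ), and ‖η‖₂ ≤ 1/(60λ). Let ḡ = ∇Φ(r̄) (which is nonzero) and set r' = r − (1/(32λ))·ḡ/‖ḡ‖₂ + η. Then Φ(r') ≤ Φ(r) − √n/240. -/

import Mathlib

/-- The ℓ2 norm. -/
noncomputable def l2 {n : ℕ} (u : Fin n → ℝ) : ℝ := Real.sqrt (∑ i, (u i) ^ 2)

open Real

private lemma abs_le_of_sq_le' {a b : ℝ} (hb : 0 ≤ b) (h : a ^ 2 ≤ b ^ 2) : |a| ≤ b := by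
  by_contra hc
  push_neg at hc
  have h2 := mul_self_lt_mul_self hb hc
  have h3 : |a| ^ 2 = a ^ 2 := sq_abs a
  nlinarith

private lemma pd_sinh_le {x : ℝ} (hx : 0 ≤ x) : Real.sinh x ≤ x * Real.cosh x := by
  have hd : ∀ t : ℝ, HasDerivAt (fun t => t * Real.cosh t - Real.sinh t)
      (t * Real.sinh t) t := by
    intro t
    have h1 := ((hasDerivAt_id t).mul (Real.hasDerivAt_cosh t)).sub (Real.hasDerivAt_sinh t)
    refine h1.congr_deriv ?_
    simp [id_eq, mul_comm]
  have hmono : MonotoneOn (fun t => t * Real.cosh t - Real.sinh t) (Set.Ici 0) := by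
    apply monotoneOn_of_deriv_nonneg (convex_Ici 0)
    · exact Continuous.continuousOn (by continuity)
    · intro t _
      exact (hd t).differentiableAt.differentiableWithinAt
    · intro t ht
      rw [(hd t).deriv]
      rw [interior_Ici] at ht
      exact mul_nonneg (le_of_lt ht) (Real.sinh_nonneg_iff.mpr (le_of_lt ht))
  have h0 := hmono (Set.self_mem_Ici) hx hx
  simp only [Real.cosh_zero, Real.sinh_zero, mul_one, zero_mul, sub_zero] at h0
  linarith

private lemma pd_cosh_sub_one_le_nn {x : ℝ} (hx : 0 ≤ x) :
    Real.cosh x - 1 ≤ x ^ 2 / 2 * Real.cosh x := by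
  have hd : ∀ t : ℝ, HasDerivAt (fun t => t ^ 2 / 2 * Real.cosh t - Real.cosh t + 1)
      ((t * Real.cosh t - Real.sinh t) + t ^ 2 / 2 * Real.sinh t) t := by
    intro t
    have h1 := (((hasDerivAt_pow 2 t).div_const 2).mul (Real.hasDerivAt_cosh t)).sub
      (Real.hasDerivAt_cosh t)
    have h2 := h1.add_const 1
    refine h2.congr_deriv ?_
    ring
  have hmono : MonotoneOn (fun t => t ^ 2 / 2 * Real.cosh t - Real.cosh t + 1) (Set.Ici 0) := by
    apply monotoneOn_of_deriv_nonneg (convex_Ici 0)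
    · exact Continuous.continuousOn (by continuity)
    · intro t _
      exact (hd t).differentiableAt.differentiableWithinAt
    · intro t ht
      rw [(hd t).deriv]
      rw [interior_Ici] at ht
      have h1 := pd_sinh_le (le_of_lt ht)
      have h2 : 0 ≤ Real.sinh t := Real.sinh_nonneg_iff.mpr (le_of_lt ht)
      nlinarith
  have h0 := hmono (Set.self_mem_Ici) hx hx
  simp only [Real.cosh_zero, Real.sinh_zero, mul_one, zero_pow, sub_self] at h0
  norm_num at h0
  linarith

private lemma pd_cosh_sub_one_le (x : ℝ) :
    Real.cosh x - 1 ≤ x ^ 2 / 2 * Real.cosh x := by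
  have h := pd_cosh_sub_one_le_nn (abs_nonneg x)
  rwa [Real.cosh_abs, sq_abs] at h

private lemma pd_sinh_sub_le_nn {x : ℝ} (hx : 0 ≤ x) :
    Real.sinh x - x ≤ x ^ 3 / 6 * Real.cosh x := by
  have hd : ∀ t : ℝ, HasDerivAt (fun t => t ^ 3 / 6 * Real.cosh t - Real.sinh t + t)
      ((t ^ 2 / 2 * Real.cosh t - Real.cosh t + 1) + t ^ 3 / 6 * Real.sinh t) t := by
    intro t
    have h1 := ((((hasDerivAt_pow 3 t).div_const 6).mul (Real.hasDerivAt_cosh t)).sub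
      (Real.hasDerivAt_sinh t)).add (hasDerivAt_id t)
    refine h1.congr_deriv ?_
    ring
  have hmono : MonotoneOn (fun t => t ^ 3 / 6 * Real.cosh t - Real.sinh t + t) (Set.Ici 0) := by
    apply monotoneOn_of_deriv_nonneg (convex_Ici 0)
    · exact Continuous.continuousOn (by continuity)
    · intro t _
      exact (hd t).differentiableAt.differentiableWithinAt
    · intro t ht
      rw [(hd t).deriv]
      rw [interior_Ici] at ht
      have h1 := pd_cosh_sub_one_le_nn (le_of_lt ht)
      have h2 : 0 ≤ Real.sinh t := Real.sinh_nonneg_iff.mpr (le_of_lt ht)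
      have h3 : (0:ℝ) ≤ t ^ 3 / 6 := div_nonneg (pow_nonneg (le_of_lt ht) 3) (by norm_num)
      nlinarith [mul_nonneg h3 h2]
  have h0 := hmono (Set.self_mem_Ici) hx hx
  simp only [Real.cosh_zero, Real.sinh_zero, mul_one, zero_pow, sub_self] at h0
  norm_num at h0
  linarith

private lemma pd_abs_sinh_sub_le (x : ℝ) :
    |Real.sinh x - x| ≤ |x| ^ 3 / 6 * Real.cosh x := by
  rcases le_total 0 x with hx | hx
  · have h1 : x ≤ Real.sinh x := by
      rcases eq_or_lt_of_le hx with h | h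
      · simp [← h]
      · exact le_of_lt (Real.self_lt_sinh_iff.mpr h)
    rw [abs_of_nonneg (by linarith), abs_of_nonneg hx]
    exact pd_sinh_sub_le_nn hx
  · have hy : 0 ≤ -x := by linarith
    have h1 : -x ≤ Real.sinh (-x) := by
      rcases eq_or_lt_of_le hy with h | h
      · simp [← h]
      · exact le_of_lt (Real.self_lt_sinh_iff.mpr h)
    rw [Real.sinh_neg] at h1
    have h2 := pd_sinh_sub_le_nn hy
    rw [Real.sinh_neg] at h2
    rw [abs_of_nonpos (by linarith), abs_of_nonpos hx, ← Real.cosh_neg]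
    linarith

private lemma pd_abs_sinh_le_cosh (x : ℝ) : |Real.sinh x| ≤ Real.cosh x := by
  rw [Real.abs_sinh, ← Real.cosh_abs]
  have h1 := Real.cosh_sub_sinh |x|
  have h2 := Real.exp_pos (-|x|)
  linarith

private lemma pd_cosh_le_abs_sinh_add_one (x : ℝ) :
    Real.cosh x ≤ |Real.sinh x| + 1 := by
  have h1 := Real.cosh_sq x
  have h2 := Real.one_le_cosh x
  have h3 := sq_abs (Real.sinh x)
  have h4 := abs_nonneg (Real.sinh x)
  nlinarith

private lemma pd_cosh_le_exp_mul {a b : ℝ} :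
    Real.cosh a ≤ Real.exp |a - b| * Real.cosh b := by
  have h1 : Real.cosh a = Real.cosh b * Real.cosh (a - b) + Real.sinh b * Real.sinh (a - b) := by
    rw [← Real.cosh_add]; ring_nf
  have h2 : Real.sinh b * Real.sinh (a - b) ≤ Real.cosh b * |Real.sinh (a - b)| := by
    calc Real.sinh b * Real.sinh (a - b) ≤ |Real.sinh b * Real.sinh (a - b)| := le_abs_self _
    _ = |Real.sinh b| * |Real.sinh (a - b)| := abs_mul _ _
    _ ≤ Real.cosh b * |Real.sinh (a - b)| :=
        mul_le_mul_of_nonneg_right (pd_abs_sinh_le_cosh b) (abs_nonneg _)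
  have h3 : Real.cosh (a - b) + |Real.sinh (a - b)| = Real.exp |a - b| := by
    rw [Real.abs_sinh, ← Real.cosh_abs, Real.cosh_add_sinh]
  have hb := Real.one_le_cosh b
  nlinarith

/-- numeric: cosh (1/48) ≤ 4608/4607 -/
private lemma pd_cosh48 : Real.cosh (1/48) ≤ 4608/4607 := by
  have h := pd_cosh_sub_one_le (1/48)
  have h2 := Real.one_le_cosh (1/48 : ℝ)
  nlinarith

private lemma pd_sinh48 : Real.sinh (1/48) ≤ 96/4607 := by
  have h := pd_sinh_le (by norm_num : (0:ℝ) ≤ 1/48)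
  have h2 := pd_cosh48
  nlinarith

private lemma pd_exp48 : Real.exp (1/48) ≤ 4704/4607 := by
  have h := Real.cosh_add_sinh (1/48 : ℝ)
  have h1 := pd_cosh48
  have h2 := pd_sinh48
  linarith

private lemma pd_coshm : Real.cosh (23/480) ≤ 101/100 := by
  have h := pd_cosh_sub_one_le (23/480)
  have h2 := Real.one_le_cosh (23/480 : ℝ)
  nlinarith

/-- Second-order Taylor bound for cosh with explicit constant. -/
private lemma pd_taylor (a t : ℝ) (ht : |t| ≤ 23/480) :
    Real.cosh (a + t) ≤ Real.cosh a + Real.sinh a * t + (13/25) * Real.cosh a * t ^ 2 := by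
  have hca := Real.one_le_cosh a
  have hct : Real.cosh t ≤ 101/100 := by
    calc Real.cosh t ≤ Real.cosh (23/480) := by
          rw [Real.cosh_le_cosh]
          rw [abs_of_nonneg (by norm_num : (0:ℝ) ≤ 23/480)]
          exact ht
    _ ≤ 101/100 := pd_coshm
  have h1 : Real.cosh t - 1 ≤ (101/200) * t ^ 2 := by
    have := pd_cosh_sub_one_le t
    nlinarith [sq_nonneg t]
  have h2 : |Real.sinh t - t| ≤ (2323/288000) * t ^ 2 := by
    have ha := pd_abs_sinh_sub_le t
    have habs : |t| ^ 3 = |t| * t ^ 2 := by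
      rw [pow_succ, pow_two, ← abs_mul, abs_mul_self, ← pow_two]
      ring
    have h3 : |t| ^ 3 / 6 * Real.cosh t ≤ (23/480) * t ^ 2 / 6 * (101/100) := by
      rw [habs]
      have h4 : |t| * t ^ 2 ≤ (23/480) * t ^ 2 :=
        mul_le_mul_of_nonneg_right ht (sq_nonneg t)
      nlinarith [sq_nonneg t, abs_nonneg t, Real.one_le_cosh t]
    calc |Real.sinh t - t| ≤ |t| ^ 3 / 6 * Real.cosh t := ha
    _ ≤ (23/480) * t ^ 2 / 6 * (101/100) := h3
    _ = (2323/288000) * t ^ 2 := by ring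
  have h5 : Real.sinh a * (Real.sinh t - t) ≤ Real.cosh a * ((2323/288000) * t ^ 2) := by
    calc Real.sinh a * (Real.sinh t - t) ≤ |Real.sinh a * (Real.sinh t - t)| := le_abs_self _
    _ = |Real.sinh a| * |Real.sinh t - t| := abs_mul _ _
    _ ≤ Real.cosh a * ((2323/288000) * t ^ 2) := by
        apply mul_le_mul (pd_abs_sinh_le_cosh a) h2 (abs_nonneg _) (by linarith)
  have h6 : Real.cosh a * (Real.cosh t - 1) ≤ Real.cosh a * ((101/200) * t ^ 2) :=
    mul_le_mul_of_nonneg_left h1 (by linarith)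
  have he : Real.cosh (a + t) = Real.cosh a + Real.sinh a * t
      + Real.cosh a * (Real.cosh t - 1) + Real.sinh a * (Real.sinh t - t) := by
    rw [Real.cosh_add]; ring
  have h7 : Real.cosh a * ((101/200) * t ^ 2) + Real.cosh a * ((2323/288000) * t ^ 2)
      ≤ (13/25) * Real.cosh a * t ^ 2 := by
    nlinarith [sq_nonneg t, mul_nonneg (by linarith : (0:ℝ) ≤ Real.cosh a) (sq_nonneg t)]
  linarith

set_option maxHeartbeats 4000000 in
/-- Potential decrease: with `λ = 16 log(40n)`, if `Φ(r) ≥ 8n`, `‖r̄ − r‖_∞ ≤ 1/(48λ)`,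
`‖η‖₂ ≤ 1/(60λ)`, `ḡ = ∇Φ(r̄)` (which is nonzero) and
`r' = r − (1/(32λ)) ḡ/‖ḡ‖₂ + η`, then `Φ(r') ≤ Φ(r) − √n/240`. -/
theorem potential_decrease {n : ℕ} (hn : 1 ≤ n)
    (lam : ℝ) (hlam : lam = 16 * Real.log (40 * n))
    (r rb η : Fin n → ℝ)
    (hΦ : (8 * n : ℝ) ≤ ∑ i, Real.cosh (lam * r i))
    (hrb : ∀ i, |rb i - r i| ≤ 1 / (48 * lam))
    (hη : l2 η ≤ 1 / (60 * lam))
    (gb : Fin n → ℝ) (hgb : gb = fun i => lam * Real.sinh (lam * rb i))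
    (r' : Fin n → ℝ)
    (hr' : r' = fun i => r i - (1 / (32 * lam)) * (gb i / l2 gb) + η i) :
    gb ≠ 0 ∧
    ∑ i, Real.cosh (lam * r' i) ≤
      (∑ i, Real.cosh (lam * r i)) - Real.sqrt n / 240 := by
  have hn1 : (1:ℝ) ≤ (n:ℝ) := by exact_mod_cast hn
  have hlam0 : 0 < lam := by
    rw [hlam]
    have h1 : (1:ℝ) < 40 * n := by nlinarith
    have := Real.log_pos h1
    linarith
  have hsqn1 : 1 ≤ Real.sqrt n := Real.one_le_sqrt.mpr hn1
  have hsqn0 : 0 ≤ Real.sqrt n := by linarith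
  have hsqn_sq : Real.sqrt n ^ 2 = n := Real.sq_sqrt (by linarith)
  set s : Fin n → ℝ := fun i => Real.sinh (lam * r i) with hs
  set sb : Fin n → ℝ := fun i => Real.sinh (lam * rb i) with hsb
  have hsi : ∀ i, s i = Real.sinh (lam * r i) := fun i => rfl
  have hsbi : ∀ i, sb i = Real.sinh (lam * rb i) := fun i => rfl
  set S : ℝ := Real.sqrt (∑ i, s i ^ 2) with hSdef
  set T : ℝ := Real.sqrt (∑ i, sb i ^ 2) with hTdef
  have hS0 : 0 ≤ S := Real.sqrt_nonneg _
  have hT0 : 0 ≤ T := Real.sqrt_nonneg _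
  have hS2 : S ^ 2 = ∑ i, s i ^ 2 := Real.sq_sqrt (Finset.sum_nonneg fun i _ => sq_nonneg _)
  have hT2 : T ^ 2 = ∑ i, sb i ^ 2 := Real.sq_sqrt (Finset.sum_nonneg fun i _ => sq_nonneg _)
  have hEl2 : (l2 η) ^ 2 = ∑ i, η i ^ 2 :=
    Real.sq_sqrt (Finset.sum_nonneg fun i _ => sq_nonneg _)
  have hE0 : 0 ≤ l2 η := Real.sqrt_nonneg _
  -- lower bound on S
  have hSn : 7 * Real.sqrt n ≤ S := by
    have hsum : (7:ℝ) * n ≤ ∑ i, (Real.cosh (lam * r i) - 1) := by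
      rw [Finset.sum_sub_distrib, Finset.sum_const, Finset.card_univ, Fintype.card_fin,
        nsmul_eq_mul, mul_one]
      push_cast
      linarith
    have hCS : (∑ i, (Real.cosh (lam * r i) - 1)) ^ 2
        ≤ (n:ℝ) * ∑ i, (Real.cosh (lam * r i) - 1) ^ 2 := by
      have h := sq_sum_le_card_mul_sum_sq (s := (Finset.univ : Finset (Fin n)))
          (f := fun i => Real.cosh (lam * r i) - 1)
      simpa using h
    have hpt : ∀ i, (Real.cosh (lam * r i) - 1) ^ 2 ≤ s i ^ 2 := by
      intro i
      rw [hsi i]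
      have h1 := Real.sinh_sq (lam * r i)
      have h2 := Real.one_le_cosh (lam * r i)
      nlinarith
    have hsum2 : ∑ i, (Real.cosh (lam * r i) - 1) ^ 2 ≤ ∑ i, s i ^ 2 :=
      Finset.sum_le_sum fun i _ => hpt i
    have hn0 : (0:ℝ) < n := by linarith
    have h0 : (0:ℝ) ≤ ∑ i, (Real.cosh (lam * r i) - 1) := le_trans (by positivity) hsum
    have hS49 : 49 * (n:ℝ) ≤ S ^ 2 := by
      rw [hS2]
      nlinarith [mul_self_le_mul_self (by positivity : (0:ℝ) ≤ 7 * (n:ℝ)) hsum]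
    have h5 : (7 * Real.sqrt n) ^ 2 ≤ S ^ 2 := by
      rw [mul_pow, hsqn_sq]
      linarith
    have h6 := abs_le_of_sq_le' hS0 h5
    rwa [abs_of_nonneg (by positivity)] at h6
  -- the perturbation d i
  have hdle : ∀ i, |lam * r i - lam * rb i| ≤ 1/48 := by
    intro i
    have h2 : lam * r i - lam * rb i = lam * (r i - rb i) := by ring
    rw [h2, abs_mul, abs_of_pos hlam0, abs_sub_comm]
    have h3 := mul_le_mul_of_nonneg_left (hrb i) hlam0.le
    have h4 : lam * (1 / (48 * lam)) = 1/48 := by field_simp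
    linarith
  have hcd : ∀ i, Real.cosh (lam * r i - lam * rb i) ≤ 4608/4607 := by
    intro i
    refine le_trans ?_ pd_cosh48
    rw [Real.cosh_le_cosh, abs_of_nonneg (by norm_num : (0:ℝ) ≤ 1/48)]
    exact hdle i
  have hsd : ∀ i, |Real.sinh (lam * r i - lam * rb i)| ≤ 96/4607 := by
    intro i
    rw [Real.abs_sinh]
    have h1 : Real.sinh |lam * r i - lam * rb i| ≤ Real.sinh (1/48) :=
      Real.sinh_le_sinh.mpr (hdle i)
    have := pd_sinh48
    linarith
  have hed : ∀ i, Real.exp |lam * r i - lam * rb i| ≤ 4704/4607 := fun i =>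
    le_trans (Real.exp_le_exp.mpr (hdle i)) pd_exp48
  have hsexp : ∀ i, s i = sb i * Real.cosh (lam * r i - lam * rb i)
      + Real.cosh (lam * rb i) * Real.sinh (lam * r i - lam * rb i) := by
    intro i
    rw [hsi i, hsbi i]
    have h1 : lam * r i = lam * rb i + (lam * r i - lam * rb i) := by ring
    rw [h1, Real.sinh_add]
    ring_nf
  -- pointwise bound |s i| ≤ K |sb i| + c
  have hptw : ∀ i, |s i| ≤ (4704/4607) * |sb i| + 96/4607 := by
    intro i
    rw [hsexp i]
    have hcd' := hcd i
    have hsd' := hsd i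
    have hB : Real.cosh (lam * rb i) ≤ |sb i| + 1 := by
      rw [hsbi i]
      exact pd_cosh_le_abs_sinh_add_one (lam * rb i)
    have hcpos := Real.cosh_pos (lam * r i - lam * rb i)
    have hBpos := Real.cosh_pos (lam * rb i)
    calc |sb i * Real.cosh (lam * r i - lam * rb i)
          + Real.cosh (lam * rb i) * Real.sinh (lam * r i - lam * rb i)|
        ≤ |sb i * Real.cosh (lam * r i - lam * rb i)|
          + |Real.cosh (lam * rb i) * Real.sinh (lam * r i - lam * rb i)| := abs_add_le _ _
      _ = |sb i| * Real.cosh (lam * r i - lam * rb i)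
          + Real.cosh (lam * rb i) * |Real.sinh (lam * r i - lam * rb i)| := by
          rw [abs_mul, abs_mul, abs_of_pos hcpos, abs_of_pos hBpos]
      _ ≤ (4704/4607) * |sb i| + 96/4607 := by
          nlinarith [abs_nonneg (sb i)]
  -- sum of |sb i|
  have habs_sb_sum : ∑ i, |sb i| ≤ Real.sqrt n * T := by
    have hCS := sq_sum_le_card_mul_sum_sq (s := (Finset.univ : Finset (Fin n)))
        (f := fun i => |sb i|)
    simp only [Finset.card_univ, Fintype.card_fin, sq_abs] at hCS
    have h2 : (∑ i, |sb i|) ^ 2 ≤ (Real.sqrt n * T) ^ 2 := by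
      rw [mul_pow, hsqn_sq, hT2]
      exact hCS
    have h3 := abs_le_of_sq_le' (mul_nonneg hsqn0 hT0) h2
    rwa [abs_of_nonneg (Finset.sum_nonneg fun i _ => abs_nonneg _)] at h3
  -- S ≤ K T + c √n
  have hST : S ≤ (4704/4607) * T + (96/4607) * Real.sqrt n := by
    have hptsq : ∀ i, s i ^ 2 ≤ ((4704/4607) * |sb i| + 96/4607) ^ 2 := by
      intro i
      have h1 := hptw i
      rw [← sq_abs (s i)]
      exact pow_le_pow_left₀ (abs_nonneg _) h1 2
    have hsum : ∑ i, s i ^ 2 ≤ ∑ i, ((4704/4607) * |sb i| + 96/4607) ^ 2 :=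
      Finset.sum_le_sum fun i _ => hptsq i
    have hexpand : ∀ i : Fin n, ((4704/4607) * |sb i| + 96/4607) ^ 2
        = (4704/4607)^2 * sb i ^ 2 + (2*(4704/4607)*(96/4607)) * |sb i| + (96/4607)^2 := by
      intro i
      rw [add_sq, mul_pow, sq_abs]
      ring
    rw [Finset.sum_congr rfl (fun i _ => hexpand i)] at hsum
    rw [Finset.sum_add_distrib, Finset.sum_add_distrib, ← Finset.mul_sum, ← Finset.mul_sum,
        Finset.sum_const, Finset.card_univ, Fintype.card_fin, nsmul_eq_mul] at hsum
    have hfin : S ^ 2 ≤ ((4704/4607) * T + (96/4607) * Real.sqrt n) ^ 2 := by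
      rw [hS2]
      nlinarith [habs_sb_sum, hT2, hsqn_sq]
    have h6 := abs_le_of_sq_le' (by positivity) hfin
    rwa [abs_of_nonneg hS0] at h6
  have hTpos : 0 < T := by linarith
  have hTne : T ≠ 0 := ne_of_gt hTpos
  have hlamne : lam ≠ 0 := ne_of_gt hlam0
  -- l2 gb
  have hl2gb : l2 gb = lam * T := by
    rw [hgb]
    simp only [l2]
    have h1 : ∑ i, (lam * Real.sinh (lam * rb i)) ^ 2 = lam ^ 2 * ∑ i, sb i ^ 2 := by
      rw [Finset.mul_sum]
      apply Finset.sum_congr rfl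
      intro i _
      rw [hsbi i]
      ring
    rw [h1, Real.sqrt_mul (sq_nonneg lam), Real.sqrt_sq hlam0.le, hTdef]
  have hgbne : gb ≠ 0 := by
    intro h
    rw [h] at hl2gb
    simp only [l2, Pi.zero_apply] at hl2gb
    norm_num at hl2gb
    rcases hl2gb with h' | h'
    · exact hlamne h'
    · exact hTne h'
  refine ⟨hgbne, ?_⟩
  -- pointwise norm bounds
  have hsbT : ∀ i, |sb i| ≤ T := by
    intro i
    apply abs_le_of_sq_le' hT0
    rw [hT2]
    exact Finset.single_le_sum (f := fun i => sb i ^ 2) (fun i _ => sq_nonneg _)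
      (Finset.mem_univ i)
  have hsS : ∀ i, |s i| ≤ S := by
    intro i
    apply abs_le_of_sq_le' hS0
    rw [hS2]
    exact Finset.single_le_sum (f := fun i => s i ^ 2) (fun i _ => sq_nonneg _)
      (Finset.mem_univ i)
  have hEi : ∀ i, |η i| ≤ l2 η := by
    intro i
    apply abs_le_of_sq_le' hE0
    rw [hEl2]
    exact Finset.single_le_sum (f := fun i => η i ^ 2) (fun i _ => sq_nonneg _)
      (Finset.mem_univ i)
  -- Cauchy-Schwarz for s and η
  have hsEta : ∑ i, s i * η i ≤ S * l2 η := by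
    have hCS := Finset.sum_mul_sq_le_sq_mul_sq Finset.univ s η
    have h2 : (∑ i, s i * η i) ^ 2 ≤ (S * l2 η) ^ 2 := by
      rw [mul_pow, hS2, hEl2]
      exact hCS
    have h3 := abs_le_of_sq_le' (mul_nonneg hS0 hE0) h2
    exact le_trans (le_abs_self _) h3
  -- cross term lower bound
  have hcross : ∀ i, (1 - 96/4607) * sb i ^ 2 - (96/4607) * |sb i| ≤ s i * sb i := by
    intro i
    rw [hsexp i]
    have h1 := Real.one_le_cosh (lam * r i - lam * rb i)
    have hB : Real.cosh (lam * rb i) ≤ |sb i| + 1 := by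
      rw [hsbi i]
      exact pd_cosh_le_abs_sinh_add_one (lam * rb i)
    have hBpos := Real.cosh_pos (lam * rb i)
    have hsd' := hsd i
    have h3 : |sb i * (Real.cosh (lam * rb i) * Real.sinh (lam * r i - lam * rb i))|
        ≤ |sb i| * ((|sb i| + 1) * (96/4607)) := by
      rw [abs_mul, abs_mul, abs_of_pos hBpos]
      apply mul_le_mul_of_nonneg_left ?_ (abs_nonneg _)
      exact mul_le_mul hB hsd' (abs_nonneg _) (by linarith [abs_nonneg (sb i)])
    have h4 := neg_abs_le (sb i * (Real.cosh (lam * rb i) * Real.sinh (lam * r i - lam * rb i)))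
    nlinarith [sq_abs (sb i), sq_nonneg (sb i), abs_nonneg (sb i)]
  have hcross_sum : (1 - 96/4607) * T^2 - (96/4607) * (Real.sqrt n * T) ≤ ∑ i, s i * sb i := by
    have h1 : ∑ i, ((1 - 96/4607) * sb i ^ 2 - (96/4607) * |sb i|) ≤ ∑ i, s i * sb i :=
      Finset.sum_le_sum fun i _ => hcross i
    rw [Finset.sum_sub_distrib, ← Finset.mul_sum, ← Finset.mul_sum] at h1
    have := habs_sb_sum
    nlinarith [hT2]
  -- upper bound on cosh(lam r i)
  have hcoshA : ∀ i, Real.cosh (lam * r i) ≤ (4704/4607) * (|sb i| + 1) := by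
    intro i
    have h1 : Real.cosh (lam * r i)
        ≤ Real.exp |lam * r i - lam * rb i| * Real.cosh (lam * rb i) := pd_cosh_le_exp_mul
    have h2 := hed i
    have hB : Real.cosh (lam * rb i) ≤ |sb i| + 1 := by
      rw [hsbi i]
      exact pd_cosh_le_abs_sinh_add_one (lam * rb i)
    have hBpos := Real.cosh_pos (lam * rb i)
    have hexp0 := Real.exp_pos |lam * r i - lam * rb i|
    nlinarith
  have hQ1 : ∑ i, Real.cosh (lam * r i) * sb i ^ 2 ≤ (4704/4607) * (T + 1) * T ^ 2 := by
    have h1 : ∀ i, Real.cosh (lam * r i) * sb i ^ 2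
        ≤ ((4704/4607) * (T + 1)) * sb i ^ 2 := by
      intro i
      apply mul_le_mul_of_nonneg_right ?_ (sq_nonneg _)
      have := hcoshA i
      have := hsbT i
      linarith
    calc ∑ i, Real.cosh (lam * r i) * sb i ^ 2
        ≤ ∑ i, ((4704/4607) * (T + 1)) * sb i ^ 2 := Finset.sum_le_sum fun i _ => h1 i
      _ = (4704/4607) * (T + 1) * T ^ 2 := by rw [← Finset.mul_sum, hT2]
  have hQ2 : ∑ i, Real.cosh (lam * r i) * η i ^ 2 ≤ (S + 1) * (l2 η) ^ 2 := by
    have h1 : ∀ i, Real.cosh (lam * r i) * η i ^ 2 ≤ (S + 1) * η i ^ 2 := by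
      intro i
      apply mul_le_mul_of_nonneg_right ?_ (sq_nonneg _)
      have h2 := pd_cosh_le_abs_sinh_add_one (lam * r i)
      rw [← hsi i] at h2
      have := hsS i
      linarith
    calc ∑ i, Real.cosh (lam * r i) * η i ^ 2
        ≤ ∑ i, (S + 1) * η i ^ 2 := Finset.sum_le_sum fun i _ => h1 i
      _ = (S + 1) * (l2 η) ^ 2 := by rw [← Finset.mul_sum, hEl2]
  -- the step
  have hgbi : ∀ i, gb i / l2 gb = sb i / T := by
    intro i
    rw [hl2gb, hgb]
    simp only
    rw [mul_div_mul_left _ _ hlamne, hsbi i]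
  have hDe : ∀ i, lam * r' i = lam * r i + (-(1/32) * (sb i / T) + lam * η i) := by
    intro i
    rw [hr']
    simp only
    rw [hgbi i]
    field_simp
    ring
  have hDeb : ∀ i, |(-(1/32) * (sb i / T) + lam * η i)| ≤ 23/480 := by
    intro i
    have h1 : |sb i / T| ≤ 1 := by
      rw [abs_div, abs_of_pos hTpos]
      exact (div_le_one hTpos).mpr (hsbT i)
    have h2 : |lam * η i| ≤ 1/60 := by
      rw [abs_mul, abs_of_pos hlam0]
      have h3 := mul_le_mul_of_nonneg_left (le_trans (hEi i) hη) hlam0.le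
      have h4 : lam * (1/(60*lam)) = 1/60 := by field_simp
      linarith
    calc |(-(1/32) * (sb i / T) + lam * η i)|
        ≤ |(-(1/32)) * (sb i / T)| + |lam * η i| := abs_add_le _ _
      _ = (1/32) * |sb i / T| + |lam * η i| := by rw [abs_mul]; norm_num
      _ ≤ (1/32) * 1 + 1/60 := by
          have := mul_le_mul_of_nonneg_left h1 (by norm_num : (0:ℝ) ≤ 1/32)
          linarith
      _ = 23/480 := by norm_num
  have hDesq : ∀ i, (-(1/32) * (sb i / T) + lam * η i) ^ 2
      ≤ (1/512) * (sb i ^ 2 / T ^ 2) + 2 * lam^2 * η i ^ 2 := by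
    intro i
    have h1 : (sb i / T) ^ 2 = sb i ^ 2 / T ^ 2 := div_pow _ _ _
    nlinarith [sq_nonneg ((1/32) * (sb i / T) + lam * η i)]
  -- Taylor bound pointwise
  have hTay : ∀ i, Real.cosh (lam * r' i) ≤ Real.cosh (lam * r i)
      + s i * (-(1/32) * (sb i / T) + lam * η i)
      + (13/25) * Real.cosh (lam * r i) * (-(1/32) * (sb i / T) + lam * η i) ^ 2 := by
    intro i
    rw [hDe i, hsi i]
    exact pd_taylor _ _ (hDeb i)
  have hsum_main : ∑ i, Real.cosh (lam * r' i) ≤ (∑ i, Real.cosh (lam * r i))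
      + (∑ i, s i * (-(1/32) * (sb i / T) + lam * η i))
      + (13/25) * ∑ i, Real.cosh (lam * r i) * (-(1/32) * (sb i / T) + lam * η i) ^ 2 := by
    calc ∑ i, Real.cosh (lam * r' i)
        ≤ ∑ i, (Real.cosh (lam * r i)
          + s i * (-(1/32) * (sb i / T) + lam * η i)
          + (13/25) * Real.cosh (lam * r i) * (-(1/32) * (sb i / T) + lam * η i) ^ 2) :=
        Finset.sum_le_sum fun i _ => hTay i
      _ = _ := by
          rw [Finset.mul_sum, ← Finset.sum_add_distrib, ← Finset.sum_add_distrib]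
          apply Finset.sum_congr rfl
          intro i _
          ring
  -- first-order term
  have hT1 : ∑ i, s i * (-(1/32) * (sb i / T) + lam * η i)
      ≤ -(1/32) * ((1 - 96/4607) * T - (96/4607) * Real.sqrt n) + S * (1/60) := by
    have hsplit : ∑ i, s i * (-(1/32) * (sb i / T) + lam * η i)
        = -(1/32) * ((∑ i, s i * sb i) / T) + lam * ∑ i, s i * η i := by
      rw [Finset.sum_div, Finset.mul_sum, Finset.mul_sum, ← Finset.sum_add_distrib]
      apply Finset.sum_congr rfl
      intro i _
      field_simp
    rw [hsplit]
    have h2 : ((1 - 96/4607) * T^2 - (96/4607) * (Real.sqrt n * T)) / T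
        ≤ (∑ i, s i * sb i) / T := by
      exact (div_le_div_iff_of_pos_right hTpos).mpr hcross_sum
    have h3 : ((1 - 96/4607) * T^2 - (96/4607) * (Real.sqrt n * T)) / T
        = (1 - 96/4607) * T - (96/4607) * Real.sqrt n := by
      field_simp
    rw [h3] at h2
    have ha : lam * (∑ i, s i * η i) ≤ lam * (S * (1/(60*lam))) := by
      apply mul_le_mul_of_nonneg_left ?_ hlam0.le
      calc ∑ i, s i * η i ≤ S * l2 η := hsEta
        _ ≤ S * (1/(60*lam)) := mul_le_mul_of_nonneg_left hη hS0
    have hb : lam * (S * (1/(60*lam))) = S * (1/60) := by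
      field_simp
    linarith
  -- second-order term
  have hT2b : ∑ i, Real.cosh (lam * r i) * (-(1/32) * (sb i / T) + lam * η i) ^ 2
      ≤ (4704/4607) * (T + 1) / 512 + (S + 1) / 1800 := by
    have h1 : ∀ i, Real.cosh (lam * r i) * (-(1/32) * (sb i / T) + lam * η i) ^ 2
        ≤ (1/512) * (Real.cosh (lam * r i) * sb i ^ 2) / T ^ 2
          + 2 * lam^2 * (Real.cosh (lam * r i) * η i ^ 2) := by
      intro i
      have hc := Real.cosh_pos (lam * r i)
      calc Real.cosh (lam * r i) * (-(1/32) * (sb i / T) + lam * η i) ^ 2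
          ≤ Real.cosh (lam * r i) * ((1/512) * (sb i ^ 2 / T ^ 2) + 2 * lam^2 * η i ^ 2) :=
          mul_le_mul_of_nonneg_left (hDesq i) hc.le
        _ = (1/512) * (Real.cosh (lam * r i) * sb i ^ 2) / T ^ 2
          + 2 * lam^2 * (Real.cosh (lam * r i) * η i ^ 2) := by ring
    have h2 : ∑ i, Real.cosh (lam * r i) * (-(1/32) * (sb i / T) + lam * η i) ^ 2
        ≤ (1/512) * (∑ i, Real.cosh (lam * r i) * sb i ^ 2) / T ^ 2
          + 2 * lam^2 * (∑ i, Real.cosh (lam * r i) * η i ^ 2) := by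
      calc ∑ i, Real.cosh (lam * r i) * (-(1/32) * (sb i / T) + lam * η i) ^ 2
          ≤ ∑ i, ((1/512) * (Real.cosh (lam * r i) * sb i ^ 2) / T ^ 2
            + 2 * lam^2 * (Real.cosh (lam * r i) * η i ^ 2)) :=
          Finset.sum_le_sum fun i _ => h1 i
        _ = _ := by
            rw [Finset.sum_add_distrib, ← Finset.mul_sum]
            congr 1
            rw [← Finset.sum_div, ← Finset.mul_sum]
    have hT2pos : (0:ℝ) < T ^ 2 := by positivity
    have h3 : (1/512) * (∑ i, Real.cosh (lam * r i) * sb i ^ 2) / T ^ 2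
        ≤ (4704/4607) * (T + 1) / 512 := by
      have h4 : (1/512) * (∑ i, Real.cosh (lam * r i) * sb i ^ 2) / T ^ 2
          ≤ (1/512) * ((4704/4607) * (T + 1) * T ^ 2) / T ^ 2 := by
        refine (div_le_div_iff_of_pos_right hT2pos).mpr ?_
        linarith [hQ1]
      have h5 : (1/512) * ((4704/4607) * (T + 1) * T ^ 2) / T ^ 2
          = (4704/4607) * (T + 1) / 512 := by
        field_simp
      linarith
    have h6 : 2 * lam^2 * (∑ i, Real.cosh (lam * r i) * η i ^ 2) ≤ (S + 1) / 1800 := by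
      have h7 : (l2 η) ^ 2 ≤ (1/(60*lam)) ^ 2 := pow_le_pow_left₀ hE0 hη 2
      have h8 : ∑ i, Real.cosh (lam * r i) * η i ^ 2 ≤ (S + 1) * (1/(60*lam)) ^ 2 := by
        calc ∑ i, Real.cosh (lam * r i) * η i ^ 2 ≤ (S + 1) * (l2 η) ^ 2 := hQ2
          _ ≤ (S + 1) * (1/(60*lam)) ^ 2 := mul_le_mul_of_nonneg_left h7 (by linarith)
      calc 2 * lam^2 * (∑ i, Real.cosh (lam * r i) * η i ^ 2)
          ≤ 2 * lam^2 * ((S + 1) * (1/(60*lam)) ^ 2) :=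
            mul_le_mul_of_nonneg_left h8 (by positivity)
        _ = (S + 1) / 1800 := by field_simp; ring
    linarith
  -- final numeric combination
  set Φ1 : ℝ := ∑ i, Real.cosh (lam * r' i) with hPhi1
  set Φ0 : ℝ := ∑ i, Real.cosh (lam * r i) with hPhi0
  set P1 : ℝ := ∑ i, s i * (-(1/32) * (sb i / T) + lam * η i) with hP1
  set P2 : ℝ := ∑ i, Real.cosh (lam * r i) * (-(1/32) * (sb i / T) + lam * η i) ^ 2 with hP2
  have hmul := mul_le_mul_of_nonneg_left hT2b (by norm_num : (0:ℝ) ≤ 13/25)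
  linarith [hsum_main, hT1, hmul, hST, hSn, hsqn1, hT0]
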